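/- Let A, r > 0 and λ ≥ 0 satisfy A = (r+λ)exp(λ)/(exp(r+λ)-1). Then x(t,z) := exp(λ(t+1-z))·(exp((r+λ)z) - 1)/(exp(r+λ) - 1) satisfies ∂x/∂t(t,z) + ∂x/∂z(t,z) = A·exp(rz)·x(t,1) for all (t,z) ∈ [0,∞)×[0,1], together with x(t,0) = 0 and x(t,1) = exp(λt). -/

import Mathlib

open Real

/-- The explicit function
`x(t,z) = e^{λ(t+1-z)} (e^{(r+λ)z} - 1)/(e^{r+λ} - 1)` is a non-decaying
classical solution of the open-loop system
`x_t + x_z = A e^{rz} x(t,1)`, `x(t,0) = 0`, with `x(t,1) = e^{λ t}`. -/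
theorem stmt_15 (A r lam : ℝ) (hA : 0 < A) (hr : 0 < r) (hlam : 0 ≤ lam)
    (hchar : A = (r + lam) * Real.exp lam / (Real.exp (r + lam) - 1))
    (x : ℝ → ℝ → ℝ)
    (hxdef : ∀ t z : ℝ,
      x t z = Real.exp (lam * (t + 1 - z))
              * (Real.exp ((r + lam) * z) - 1) / (Real.exp (r + lam) - 1)) :
    (∀ t ≥ (0:ℝ), ∀ z ∈ Set.Icc (0:ℝ) 1,
      deriv (fun t' => x t' z) t + deriv (fun z' => x t z') z
        = A * Real.exp (r * z) * x t 1) ∧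
    (∀ t ≥ (0:ℝ), x t 0 = 0) ∧
    (∀ t ≥ (0:ℝ), x t 1 = Real.exp (lam * t)) := by
  have hrl : 0 < r + lam := by linarith
  have hD : Real.exp (r + lam) - 1 ≠ 0 := by
    nlinarith [Real.add_one_le_exp (r + lam), Real.exp_pos (r + lam)]
  have hx1 : ∀ t : ℝ, x t 1 = Real.exp (lam * t) := by
    intro t
    rw [hxdef]
    rw [mul_one, show lam * (t + 1 - 1) = lam * t by ring]
    field_simp
  refine ⟨?_, ?_, fun t _ => hx1 t⟩
  · intro t _ z _
    have h1 : HasDerivAt (fun t' => x t' z)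
        (lam * Real.exp (lam * (t + 1 - z))
          * (Real.exp ((r + lam) * z) - 1) / (Real.exp (r + lam) - 1)) t := by
      simp only [hxdef]
      have : HasDerivAt (fun t' : ℝ => lam * (t' + 1 - z)) lam t := by
        simpa using ((hasDerivAt_id t).add_const 1 |>.sub_const z).const_mul lam
      have he := this.exp
      have := (he.mul_const (Real.exp ((r + lam) * z) - 1)).div_const
        (Real.exp (r + lam) - 1)
      exact this.congr_deriv (by ring)
    have h2 : HasDerivAt (fun z' => x t z')
        ((-lam * Real.exp (lam * (t + 1 - z)) * (Real.exp ((r + lam) * z) - 1)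
          + Real.exp (lam * (t + 1 - z)) * ((r + lam) * Real.exp ((r + lam) * z)))
          / (Real.exp (r + lam) - 1)) z := by
      simp only [hxdef]
      have hu : HasDerivAt (fun z' : ℝ => lam * (t + 1 - z')) (-lam) z := by
        simpa using (((hasDerivAt_id z).const_sub (t + 1)).const_mul lam)
      have hv : HasDerivAt (fun z' : ℝ => Real.exp ((r + lam) * z') - 1)
          ((r + lam) * Real.exp ((r + lam) * z)) z := by
        have : HasDerivAt (fun z' : ℝ => (r + lam) * z') (r + lam) z := by
          simpa using (hasDerivAt_id z).const_mul (r + lam)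
        simpa [mul_comm] using this.exp.sub_const 1
      have := ((hu.exp.mul hv).div_const (Real.exp (r + lam) - 1))
      exact this.congr_deriv (by ring)
    rw [h1.deriv, h2.deriv, hx1]
    rw [hchar]
    have key : Real.exp (lam * (t + 1 - z)) * Real.exp ((r + lam) * z)
        = Real.exp lam * Real.exp (r * z) * Real.exp (lam * t) := by
      rw [← Real.exp_add, ← Real.exp_add, ← Real.exp_add]
      ring_nf
    field_simp
    rw [mul_comm z (r + lam), mul_comm z r] at *
    nlinarith [key, Real.exp_pos (lam * (t + 1 - z))]
  · intro t _
    rw [hxdef]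
    simp
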